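/- The graph G₂ has exactly one divisor class of degree 2 and Baker–Norine rank at least 1; equivalently, there is a unique class [D] ∈ Pic(G₂) with deg(D) = 2 and r(D) ≥ 1. -/

import Mathlib

open scoped Classical

namespace BNGraph

variable {V : Type} [Fintype V]

/-- The degree of a divisor `D : V → ℤ`: the sum of its values. -/
def degSum (D : V → ℤ) : ℤ := ∑ v, D v

/-- A divisor is effective if all its values are nonnegative. -/
def Effective (D : V → ℤ) : Prop := ∀ v, 0 ≤ D v

/-- The combinatorial Laplacian of a graph, as a homomorphism on divisors. -/
noncomputable def lap (G : SimpleGraph V) : (V → ℤ) →+ (V → ℤ) where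
  toFun f := fun v => (G.degree v : ℤ) * f v - ∑ w ∈ G.neighborFinset v, f w
  map_zero' := by
    funext v; simp
  map_add' f g := by
    funext v
    simp only [Pi.add_apply, Finset.sum_add_distrib]
    ring

/-- The subgroup of principal divisors: the image of the Laplacian. -/
noncomputable def Principal (G : SimpleGraph V) : AddSubgroup (V → ℤ) := (lap G).range

/-- Linear equivalence of divisors. -/
def LinEquiv (G : SimpleGraph V) (D D' : V → ℤ) : Prop := D - D' ∈ Principal G

/-- A divisor is winnable if it is linearly equivalent to an effective divisor. -/
def Winnable (G : SimpleGraph V) (D : V → ℤ) : Prop :=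
  ∃ E : V → ℤ, Effective E ∧ LinEquiv G D E

/-- The Baker–Norine rank of a divisor: the largest `r ≥ 0` such that `D - E` is
winnable for every effective divisor `E` of degree `r`, or `-1` if there is no such `r`
(equivalently, if `D` itself is not winnable). -/
noncomputable def bnRank (G : SimpleGraph V) (D : V → ℤ) : ℤ :=
  sSup {r : ℤ | r = -1 ∨ (0 ≤ r ∧
    ∀ E : V → ℤ, Effective E → degSum E = r → Winnable G (D - E))}

/-- The Picard group of a graph: divisors modulo principal divisors. -/
abbrev Pic (G : SimpleGraph V) : Type _ := (V → ℤ) ⧸ Principal G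

/-- The number of divisor classes of degree `d` and Baker–Norine rank `r`. -/
noncomputable def numClasses (G : SimpleGraph V) (d r : ℤ) : ℕ :=
  Set.ncard {c : Pic G | ∃ D : V → ℤ,
    QuotientAddGroup.mk' (Principal G) D = c ∧ degSum D = d ∧ bnRank G D = r}

/-- Two graphs have the same two-variable zeta function iff for every degree `d` and
rank `r` they have the same number of divisor classes of degree `d` and rank `r`. -/
def SameZeta {W : Type} [Fintype W] (G : SimpleGraph V) (G' : SimpleGraph W) : Prop :=
  ∀ d r : ℤ, numClasses G d r = numClasses G' d r

/-- Degree as a homomorphism on divisors. -/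
def degHom : (V → ℤ) →+ ℤ where
  toFun := degSum
  map_zero' := by simp [degSum]
  map_add' f g := by simp [degSum, Finset.sum_add_distrib]

/-- The subgroup of divisors of degree zero. -/
def Deg0 (V : Type) [Fintype V] : AddSubgroup (V → ℤ) := (degHom (V := V)).ker

/-- The Jacobian of a graph: divisor classes of degree zero. -/
noncomputable abbrev Jac (G : SimpleGraph V) : Type _ :=
  Deg0 V ⧸ ((Principal G).addSubgroupOf (Deg0 V))

/-- The number of connected components of the spanning subgraph with edge set `A`. -/
noncomputable def numComponents (V : Type) [Fintype V] (A : Set (Sym2 V)) : ℕ :=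
  Nat.card (SimpleGraph.fromEdgeSet A).ConnectedComponent

/-- The number of edges of a graph. -/
noncomputable def edgeCount (G : SimpleGraph V) : ℕ := Nat.card G.edgeSet

open MvPolynomial in
/-- The Tutte polynomial of `G`, as a polynomial in `ℤ[x, y]` with `x = X 0`, `y = X 1`:
`T_G(x,y) = Σ_{A ⊆ E(G)} (x−1)^(c(A)−c(E(G))) (y−1)^(c(A)+|A|−|V(G)|)`. -/
noncomputable def tutte (G : SimpleGraph V) : MvPolynomial (Fin 2) ℤ :=
  ∑ A ∈ G.edgeFinset.powerset,
    (X 0 - 1) ^ (numComponents V ↑A - numComponents V G.edgeSet) *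
    (X 1 - 1) ^ (numComponents V ↑A + A.card - Fintype.card V)


/-- `G₂`: the diamond graph (`K₄` minus an edge) on vertices `0,1,2,3`
(with `u = 0`, `v = 1` of degree 3 and `x = 2`, `y = 3` of degree 2),
with a triangle `2,4,5` attached at the vertex `x = 2`. -/
def G2 : SimpleGraph (Fin 6) :=
  SimpleGraph.fromEdgeSet
    {s(0,1), s(0,2), s(0,3), s(1,2), s(1,3), s(2,4), s(2,5), s(4,5)}


/-! ### Auxiliary material for the proof -/

lemma G2_nb0 : G2.neighborFinset 0 = {1, 2, 3} := by
  ext a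
  simp only [SimpleGraph.mem_neighborFinset, G2, SimpleGraph.fromEdgeSet_adj,
    Set.mem_insert_iff, Set.mem_singleton_iff]
  fin_cases a <;> (erw [SimpleGraph.mem_neighborFinset]; decide)

lemma G2_nb1 : G2.neighborFinset 1 = {0, 2, 3} := by
  ext a
  simp only [SimpleGraph.mem_neighborFinset, G2, SimpleGraph.fromEdgeSet_adj,
    Set.mem_insert_iff, Set.mem_singleton_iff]
  fin_cases a <;> (erw [SimpleGraph.mem_neighborFinset]; decide)

lemma G2_nb2 : G2.neighborFinset 2 = {0, 1, 4, 5} := by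
  ext a
  simp only [SimpleGraph.mem_neighborFinset, G2, SimpleGraph.fromEdgeSet_adj,
    Set.mem_insert_iff, Set.mem_singleton_iff]
  fin_cases a <;> (erw [SimpleGraph.mem_neighborFinset]; decide)

lemma G2_nb3 : G2.neighborFinset 3 = {0, 1} := by
  ext a
  simp only [SimpleGraph.mem_neighborFinset, G2, SimpleGraph.fromEdgeSet_adj,
    Set.mem_insert_iff, Set.mem_singleton_iff]
  fin_cases a <;> (erw [SimpleGraph.mem_neighborFinset]; decide)

lemma G2_nb4 : G2.neighborFinset 4 = {2, 5} := by
  ext a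
  simp only [SimpleGraph.mem_neighborFinset, G2, SimpleGraph.fromEdgeSet_adj,
    Set.mem_insert_iff, Set.mem_singleton_iff]
  fin_cases a <;> (erw [SimpleGraph.mem_neighborFinset]; decide)

lemma G2_nb5 : G2.neighborFinset 5 = {2, 4} := by
  ext a
  simp only [SimpleGraph.mem_neighborFinset, G2, SimpleGraph.fromEdgeSet_adj,
    Set.mem_insert_iff, Set.mem_singleton_iff]
  fin_cases a <;> (erw [SimpleGraph.mem_neighborFinset]; decide)

lemma lap_apply' (G : SimpleGraph (Fin 6)) (f : Fin 6 → ℤ) (v : Fin 6) :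
    lap G f v = (G.degree v : ℤ) * f v - ∑ w ∈ G.neighborFinset v, f w := rfl

lemma G2_lap0 (f : Fin 6 → ℤ) : lap G2 f 0 = 3 * f 0 - (f 1 + f 2 + f 3) := by
  rw [lap_apply', SimpleGraph.degree, G2_nb0,
    Finset.sum_insert (by decide), Finset.sum_insert (by decide), Finset.sum_singleton,
    show (({1, 2, 3} : Finset (Fin 6)).card : ℤ) = 3 from by decide]
  ring

lemma G2_lap1 (f : Fin 6 → ℤ) : lap G2 f 1 = 3 * f 1 - (f 0 + f 2 + f 3) := by
  rw [lap_apply', SimpleGraph.degree, G2_nb1,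
    Finset.sum_insert (by decide), Finset.sum_insert (by decide), Finset.sum_singleton,
    show (({0, 2, 3} : Finset (Fin 6)).card : ℤ) = 3 from by decide]
  ring

lemma G2_lap2 (f : Fin 6 → ℤ) : lap G2 f 2 = 4 * f 2 - (f 0 + f 1 + f 4 + f 5) := by
  rw [lap_apply', SimpleGraph.degree, G2_nb2,
    Finset.sum_insert (by decide), Finset.sum_insert (by decide),
    Finset.sum_insert (by decide), Finset.sum_singleton,
    show (({0, 1, 4, 5} : Finset (Fin 6)).card : ℤ) = 4 from by decide]
  ring

lemma G2_lap3 (f : Fin 6 → ℤ) : lap G2 f 3 = 2 * f 3 - (f 0 + f 1) := by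
  rw [lap_apply', SimpleGraph.degree, G2_nb3,
    Finset.sum_insert (by decide), Finset.sum_singleton,
    show (({0, 1} : Finset (Fin 6)).card : ℤ) = 2 from by decide]

lemma G2_lap4 (f : Fin 6 → ℤ) : lap G2 f 4 = 2 * f 4 - (f 2 + f 5) := by
  rw [lap_apply', SimpleGraph.degree, G2_nb4,
    Finset.sum_insert (by decide), Finset.sum_singleton,
    show (({2, 5} : Finset (Fin 6)).card : ℤ) = 2 from by decide]

lemma G2_lap5 (f : Fin 6 → ℤ) : lap G2 f 5 = 2 * f 5 - (f 2 + f 4) := by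
  rw [lap_apply', SimpleGraph.degree, G2_nb5,
    Finset.sum_insert (by decide), Finset.sum_singleton,
    show (({2, 4} : Finset (Fin 6)).card : ℤ) = 2 from by decide]

lemma lap_eval (f : Fin 6 → ℤ) : lap G2 f =
    ![3 * f 0 - (f 1 + f 2 + f 3),
      3 * f 1 - (f 0 + f 2 + f 3),
      4 * f 2 - (f 0 + f 1 + f 4 + f 5),
      2 * f 3 - (f 0 + f 1),
      2 * f 4 - (f 2 + f 5),
      2 * f 5 - (f 2 + f 4)] := by
  funext v
  fin_cases v
  · exact G2_lap0 f
  · exact G2_lap1 f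
  · exact G2_lap2 f
  · exact G2_lap3 f
  · exact G2_lap4 f
  · exact G2_lap5 f

lemma degSum_eq (D : Fin 6 → ℤ) :
    degSum D = D 0 + D 1 + D 2 + D 3 + D 4 + D 5 := Fin.sum_univ_six D

lemma degSum_lap (f : Fin 6 → ℤ) : degSum (lap G2 f) = 0 := by
  rw [degSum_eq, G2_lap0, G2_lap1, G2_lap2, G2_lap3, G2_lap4, G2_lap5]
  ring

/-- The certificate homomorphism: kills principal divisors of `G2`. -/
def phi (D : Fin 6 → ℤ) : ZMod 24 :=
  ((19 * D 0 + D 1 + 10 * D 2 + 22 * D 3 + 18 * D 4 + 2 * D 5 : ℤ) : ZMod 24)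

lemma phi_lap (f : Fin 6 → ℤ) : phi (lap G2 f) = 0 := by
  unfold phi
  rw [G2_lap0, G2_lap1, G2_lap2, G2_lap3, G2_lap4, G2_lap5]
  rw [show (19 * (3 * f 0 - (f 1 + f 2 + f 3)) + (3 * f 1 - (f 0 + f 2 + f 3)) +
      10 * (4 * f 2 - (f 0 + f 1 + f 4 + f 5)) + 22 * (2 * f 3 - (f 0 + f 1)) +
      18 * (2 * f 4 - (f 2 + f 5)) + 2 * (2 * f 5 - (f 2 + f 4)) : ℤ) =
      24 * (f 0 - 2 * f 1 + f 3 + f 4 - f 5) from by ring]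
  push_cast
  rw [show (24 : ZMod 24) = 0 from by decide]
  ring

lemma phi_sub (D D' : Fin 6 → ℤ) : phi (D - D') = phi D - phi D' := by
  unfold phi
  simp only [Pi.sub_apply]
  push_cast
  ring

lemma phi_congr {D D' : Fin 6 → ℤ} (h : D - D' ∈ Principal G2) : phi D = phi D' := by
  obtain ⟨f, hf⟩ := h
  have h0 := phi_lap f
  rw [hf, phi_sub] at h0
  exact sub_eq_zero.mp h0

/-- The indicator divisor of a vertex. -/
def dd (w : Fin 6) : Fin 6 → ℤ := fun u => if u = w then 1 else 0

/-- A divisor of degree `r` concentrated at a vertex. -/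
def sv (v : Fin 6) (r : ℤ) : Fin 6 → ℤ := fun u => if u = v then r else 0

lemma sv_eff (v : Fin 6) {r : ℤ} (hr : 0 ≤ r) : Effective (sv v r) := by
  intro u
  unfold sv
  split <;> omega

lemma sv_degSum (v : Fin 6) (r : ℤ) : degSum (sv v r) = r := by
  rw [degSum_eq]
  fin_cases v <;> simp [sv]

/-- The distinguished divisor `δ₀ + δ₁`. -/
def D0 : Fin 6 → ℤ := ![1, 1, 0, 0, 0, 0]

lemma dd_dd_eq_D0 : dd 0 + dd 1 = D0 := by decide

lemma degSum_D0 : degSum D0 = 2 := by rw [degSum_eq]; decide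

lemma winnable_degSum_nonneg {D : Fin 6 → ℤ} (h : Winnable G2 D) : 0 ≤ degSum D := by
  obtain ⟨E, hE, f, hf⟩ := h
  have hd : degSum (D - E) = 0 := by rw [← hf]; exact degSum_lap f
  have hDE : degSum (D - E) = degSum D - degSum E := by
    unfold degSum
    simp [Pi.sub_apply, Finset.sum_sub_distrib]
  have hE' : 0 ≤ degSum E := Finset.sum_nonneg fun v _ => hE v
  omega

/-- The defining set of the Baker–Norine rank. -/
def bnSet (D : Fin 6 → ℤ) : Set ℤ :=
  {r : ℤ | r = -1 ∨ (0 ≤ r ∧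
    ∀ E : Fin 6 → ℤ, Effective E → degSum E = r → Winnable G2 (D - E))}

lemma bnRank_eq (D : Fin 6 → ℤ) : bnRank G2 D = sSup (bnSet D) := rfl

lemma bnSet_nonempty (D : Fin 6 → ℤ) : (bnSet D).Nonempty := ⟨-1, Or.inl rfl⟩

lemma bnSet_bddAbove {D : Fin 6 → ℤ} (h2 : degSum D = 2) : BddAbove (bnSet D) := by
  refine ⟨2, fun r hr => ?_⟩
  rcases hr with hr | ⟨hr0, hP⟩
  · omega
  by_contra hgt
  push_neg at hgt
  have hw := hP (sv 0 r) (sv_eff 0 hr0) (sv_degSum 0 r)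
  have hnn := winnable_degSum_nonneg hw
  have hd : degSum (D - sv 0 r) = degSum D - degSum (sv 0 r) := by
    unfold degSum
    simp [Pi.sub_apply, Finset.sum_sub_distrib]
  rw [hd, h2, sv_degSum] at hnn
  omega

lemma eff_deg1 {E : Fin 6 → ℤ} (hE : Effective E) (h1 : degSum E = 1) :
    ∃ w : Fin 6, E = dd w := by
  rw [degSum_eq] at h1
  have h0 := hE 0; have h1' := hE 1; have h2 := hE 2
  have h3 := hE 3; have h4 := hE 4; have h5 := hE 5
  have key : E 0 = 1 ∨ E 1 = 1 ∨ E 2 = 1 ∨ E 3 = 1 ∨ E 4 = 1 ∨ E 5 = 1 := by omega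
  rcases key with h | h | h | h | h | h
  · exact ⟨0, funext fun u => by fin_cases u <;> simp [dd] <;> omega⟩
  · exact ⟨1, funext fun u => by fin_cases u <;> simp [dd] <;> omega⟩
  · exact ⟨2, funext fun u => by fin_cases u <;> simp [dd] <;> omega⟩
  · exact ⟨3, funext fun u => by fin_cases u <;> simp [dd] <;> omega⟩
  · exact ⟨4, funext fun u => by fin_cases u <;> simp [dd] <;> omega⟩
  · exact ⟨5, funext fun u => by fin_cases u <;> simp [dd] <;> omega⟩

/-- Explicit winnability facts for `D0 = δ₀ + δ₁`. -/
lemma D0_win (w : Fin 6) : Winnable G2 (D0 - dd w) := by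
  fin_cases w
  · exact ⟨dd 1, (fun u => by simp only [dd]; split <;> omega), ⟨0, by rw [map_zero]; decide⟩⟩
  · exact ⟨dd 0, (fun u => by simp only [dd]; split <;> omega), ⟨0, by rw [map_zero]; decide⟩⟩
  · exact ⟨dd 2, (fun u => by simp only [dd]; split <;> omega), ⟨![-2, -2, -3, -2, -3, -3], by rw [lap_eval]; decide⟩⟩
  · exact ⟨dd 3, (fun u => by simp only [dd]; split <;> omega), ⟨![-2, -2, -2, -3, -2, -2], by rw [lap_eval]; decide⟩⟩
  · exact ⟨dd 5, (fun u => by simp only [dd]; split <;> omega), ⟨![-1, -1, -2, -1, -3, -3], by rw [lap_eval]; decide⟩⟩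
  · exact ⟨dd 4, (fun u => by simp only [dd]; split <;> omega), ⟨![-1, -1, -2, -1, -3, -3], by rw [lap_eval]; decide⟩⟩

lemma rank_D0 : 1 ≤ bnRank G2 D0 := by
  rw [bnRank_eq]
  refine le_csSup (bnSet_bddAbove degSum_D0) (Or.inr ⟨by norm_num, fun E hE hdeg => ?_⟩)
  obtain ⟨w, rfl⟩ := eff_deg1 hE hdeg
  exact D0_win w

lemma rank_pairs {D : Fin 6 → ℤ} (hdeg : degSum D = 2) (hrank : 1 ≤ bnRank G2 D)
    (v : Fin 6) : ∃ w : Fin 6, D - (dd v + dd w) ∈ Principal G2 := by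
  rw [bnRank_eq] at hrank
  have hmem := Int.csSup_mem (bnSet_nonempty D) (bnSet_bddAbove hdeg)
  set r := sSup (bnSet D) with hr
  rcases hmem with h | ⟨hr0, hP⟩
  · omega
  -- `D - r·δ_v` is winnable, hence so is `D - δ_v`
  have hw := hP (sv v r) (sv_eff v hr0) (sv_degSum v r)
  obtain ⟨F, hF, g, hg⟩ := hw
  have hwin : Winnable G2 (D - dd v) := by
    refine ⟨F + sv v (r - 1), fun u => ?_, g, ?_⟩
    · have := hF u
      have : 0 ≤ sv v (r - 1) u := sv_eff v (by omega) u
      have := hF u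
      simp only [Pi.add_apply]
      omega
    · rw [hg]
      funext u
      simp only [Pi.sub_apply, Pi.add_apply, dd, sv]
      split <;> ring
  -- winnable of degree 1 means equivalent to some `δ_w`
  obtain ⟨E, hE, f, hf⟩ := hwin
  have hdE : degSum E = 1 := by
    have h0 : degSum ((D - dd v) - E) = 0 := by rw [← hf]; exact degSum_lap f
    have hsub : ∀ A B : Fin 6 → ℤ, degSum (A - B) = degSum A - degSum B := by
      intro A B
      unfold degSum
      simp [Pi.sub_apply, Finset.sum_sub_distrib]
    have hddv : degSum (dd v) = 1 := by rw [degSum_eq]; fin_cases v <;> decide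
    rw [hsub, hsub, hddv, hdeg] at h0
    omega
  obtain ⟨w, rfl⟩ := eff_deg1 hE hdE
  refine ⟨w, ?_⟩
  have : D - (dd v + dd w) = (D - dd v) - dd w := by funext u; simp; ring
  rw [this, ← hf]
  exact ⟨f, rfl⟩

lemma pin {D : Fin 6 → ℤ}
    (h0 : ∃ w, D - (dd 0 + dd w) ∈ Principal G2)
    (h1 : ∃ w, D - (dd 1 + dd w) ∈ Principal G2) :
    D - D0 ∈ Principal G2 := by
  obtain ⟨w0, hw0⟩ := h0
  obtain ⟨w1, hw1⟩ := h1
  have heq : phi (dd 0 + dd w0) = phi (dd 1 + dd w1) :=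
    (phi_congr hw0).symm.trans (phi_congr hw1)
  fin_cases w0 <;> fin_cases w1 <;>
    first
      | (rw [← dd_dd_eq_D0]; exact hw0)
      | (exact absurd heq (by decide))

/-- `G₂` has exactly one divisor class of degree 2 and Baker–Norine rank at least 1. -/
theorem G2_unique_degTwo_rankGeOne_class :
    ∃! c : Pic G2, ∃ D : Fin 6 → ℤ,
      QuotientAddGroup.mk' (Principal G2) D = c ∧ degSum D = 2 ∧ 1 ≤ bnRank G2 D := by
  refine ⟨QuotientAddGroup.mk' (Principal G2) D0,
    ⟨D0, rfl, degSum_D0, rank_D0⟩, ?_⟩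
  rintro c ⟨D, rfl, hdeg, hrank⟩
  have hP : D - D0 ∈ Principal G2 :=
    pin (rank_pairs hdeg hrank 0) (rank_pairs hdeg hrank 1)
  refine (QuotientAddGroup.mk'_eq_mk' (Principal G2)).mpr ⟨D0 - D, ?_, by abel⟩
  simpa using neg_mem hP


end BNGraph
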